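/- Let L be a semivalid representation of a connected graph G, and let β be a broken cone of P(L), i.e. a cone whose vectors x satisfy that G[supp_+(x)] is disconnected. If α is a cone of P(L) contained in the boundary of β, then: (i) supp_-(α) = supp_-(β); (ii) G[supp_+(α)] equals a single connected component of G[supp_+(β)]; (iii) α is 1-dimensional. -/
import Mathlib


open Matrix Set

variable {V : Type*} [Fintype V] [DecidableEq V]

/-- Positive support of a vector. -/
def posSupp (x : V → ℝ) : Set V := {v | 0 < x v}

/-- Negative support of a vector. -/
def negSupp (x : V → ℝ) : Set V := {v | x v < 0}

/-- Support of a vector. -/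
def supp (x : V → ℝ) : Set V := {v | x v ≠ 0}

/-- External neighborhood of a set of vertices. -/
def nbhd (G : SimpleGraph V) (S : Set V) : Set V := {v | v ∉ S ∧ ∃ u ∈ S, G.Adj u v}

/-- Number of connected components of the subgraph induced by `S`. -/
noncomputable def compCount (G : SimpleGraph V) (S : Set V) : ℕ :=
  Nat.card (G.induce S).ConnectedComponent

/-- `C` is (the vertex set of) a connected component of the subgraph induced by `S`. -/
def IsComponentOf (G : SimpleGraph V) (S C : Set V) : Prop :=
  ∃ K : (G.induce S).ConnectedComponent, C = Subtype.val '' K.supp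

/-- `M ∈ M(G)`: a real symmetric matrix with exactly one negative eigenvalue
(counted with multiplicity), negative entries on edges and zero off-diagonal
entries on non-edges. -/
structure CdVMatrix (G : SimpleGraph V) (M : Matrix V V ℝ) : Prop where
  herm : M.IsHermitian
  edge_neg : ∀ u v, G.Adj u v → M u v < 0
  nonedge_zero : ∀ u v, u ≠ v → ¬ G.Adj u v → M u v = 0
  one_neg : {i | herm.eigenvalues i < 0}.ncard = 1

/-- Semivalid representation of a graph: conditions (i)-(iv). -/
def Semivalid (G : SimpleGraph V) (L : Submodule ℝ (V → ℝ)) : Prop :=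
  ∀ x ∈ L, x ≠ 0 →
    ((posSupp x).Nonempty ∧ (negSupp x).Nonempty) ∧
    ((G.induce (posSupp x)).Connected ∨
      (compCount G (posSupp x) = 2 ∧ (G.induce (negSupp x)).Connected)) ∧
    ((∀ y ∈ L, y ≠ 0 → supp y ⊆ supp x → supp y = supp x) →
      (G.induce (posSupp x)).Connected ∧ (G.induce (negSupp x)).Connected) ∧
    (¬ (G.induce (posSupp x)).Connected →
      (∀ u ∈ posSupp x, ∀ v ∈ negSupp x, ¬ G.Adj u v) ∧
      (∀ C : Set V, IsComponentOf G (supp x) C → nbhd G C = nbhd G (supp x)))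

/-- The sign-pattern cone of `x` in `L` (a relatively open cone of the fan `P(L)`). -/
def signCone (L : Submodule ℝ (V → ℝ)) (x : V → ℝ) : Set (V → ℝ) :=
  {y | y ∈ L ∧ posSupp y = posSupp x ∧ negSupp y = negSupp x}

/-- The dimension of the cone of `x`, i.e. the dimension of its linear span. -/
noncomputable def coneDim (L : Submodule ℝ (V → ℝ)) (x : V → ℝ) : ℕ :=
  Module.finrank ℝ (Submodule.span ℝ (signCone L x))

/-- The graph parameter η: maximal dimension of a semivalid representation. -/
noncomputable def etaParam (G : SimpleGraph V) : ℕ :=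
  sSup {n | ∃ L : Submodule ℝ (V → ℝ), Semivalid G L ∧ Module.finrank ℝ L = n}

/-- Valid representation of a graph. -/
def Valid (G : SimpleGraph V) (X : Submodule ℝ (V → ℝ)) : Prop :=
  ∀ x ∈ X, x ≠ 0 → (G.induce (posSupp x)).Connected

/-- The graph parameter λ: maximal dimension of a valid representation. -/
noncomputable def lambdaParam (G : SimpleGraph V) : ℕ :=
  sSup {n | ∃ X : Submodule ℝ (V → ℝ), Valid G X ∧ Module.finrank ℝ X = n}

/-- The Strong Arnold hypothesis. -/
def SAH (G : SimpleGraph V) (M : Matrix V V ℝ) : Prop :=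
  ∀ X : Matrix V V ℝ, X.IsSymm → (∀ u v, (u = v ∨ G.Adj u v) → X u v = 0) →
    M * X = 0 → X = 0

/-- The Colin de Verdière parameter μ. -/
noncomputable def muParam (G : SimpleGraph V) : ℕ :=
  sSup {n | ∃ M : Matrix V V ℝ, CdVMatrix G M ∧ SAH G M ∧
    Module.finrank ℝ (LinearMap.ker M.mulVecLin) = n}


section Aux

set_option linter.unusedSectionVars false

/-- Walks in `G[S]` starting in `A` stay in `A` when no edge leaves `A` within `S`. -/
lemma walk_stay (G : SimpleGraph V) {S A : Set V}
    (hno : ∀ a ∈ A, ∀ b ∈ S \ A, ¬ G.Adj a b) :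
    ∀ {u w : ↥S} (_ : (G.induce S).Walk u w) (hu : u.val ∈ A),
      ∃ hw : w.val ∈ A, (G.induce A).Reachable ⟨u.val, hu⟩ ⟨w.val, hw⟩ := by
  intro u w p
  induction p with
  | nil => intro hu; exact ⟨hu, SimpleGraph.Reachable.refl _⟩
  | @cons u v w h p ih =>
    intro hu
    by_cases hv : v.val ∈ A
    · obtain ⟨hw, hr⟩ := ih hv
      exact ⟨hw, SimpleGraph.Reachable.trans
        (SimpleGraph.Adj.reachable (show (G.induce A).Adj ⟨u.val, hu⟩ ⟨v.val, hv⟩ from h)) hr⟩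
    · exact absurd h (hno u.val hu v.val ⟨v.2, hv⟩)

lemma disconnected_of_partition (G : SimpleGraph V) {A B : Set V}
    (hAne : A.Nonempty) (hBne : B.Nonempty) (hdisj : ∀ a ∈ A, a ∉ B)
    (hnoedge : ∀ a ∈ A, ∀ b ∈ B, ¬ G.Adj a b) :
    ¬ (G.induce (A ∪ B)).Connected := by
  intro hc
  obtain ⟨a, ha⟩ := hAne
  obtain ⟨b, hb⟩ := hBne
  obtain ⟨p⟩ := hc.preconnected ⟨a, Or.inl ha⟩ ⟨b, Or.inr hb⟩
  have hno : ∀ x ∈ A, ∀ y ∈ (A ∪ B) \ A, ¬ G.Adj x y := by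
    intro x hx y hy
    exact hnoedge x hx y (hy.1.resolve_left hy.2)
  obtain ⟨hbA, -⟩ := walk_stay G hno p ha
  exact hdisj b hbA hb

lemma exists_crossing_edge (G : SimpleGraph V) {S A : Set V}
    (hconn : (G.induce S).Connected) (hA : A ⊆ S) (hAne : A.Nonempty)
    (hSA : (S \ A).Nonempty) : ∃ a ∈ A, ∃ b ∈ S \ A, G.Adj a b := by
  by_contra hcon
  push_neg at hcon
  obtain ⟨a, ha⟩ := hAne
  obtain ⟨b, hb⟩ := hSA
  obtain ⟨p⟩ := hconn.preconnected ⟨a, hA ha⟩ ⟨b, hb.1⟩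
  obtain ⟨hbA, -⟩ := walk_stay G hcon p ha
  exact hb.2 hbA

lemma reachable_induce_mono (G : SimpleGraph V) {A S : Set V} (h : A ⊆ S)
    {u v : V} (hu : u ∈ A) (hv : v ∈ A)
    (hr : (G.induce A).Reachable ⟨u, hu⟩ ⟨v, hv⟩) :
    (G.induce S).Reachable ⟨u, h hu⟩ ⟨v, h hv⟩ := by
  let f : G.induce A →g G.induce S :=
    ⟨fun x => ⟨x.1, h x.2⟩, fun {a b} hab => hab⟩
  exact hr.map f

lemma component_of (G : SimpleGraph V) {P A : Set V} (hA : A ⊆ P) (hAne : A.Nonempty)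
    (hconn : (G.induce A).Connected)
    (hno : ∀ a ∈ A, ∀ b ∈ P \ A, ¬ G.Adj a b) :
    ∃ K : (G.induce P).ConnectedComponent, A = Subtype.val '' K.supp := by
  obtain ⟨a, ha⟩ := hAne
  refine ⟨(G.induce P).connectedComponentMk ⟨a, hA ha⟩, ?_⟩
  ext b
  constructor
  · intro hb
    have hr := hconn.preconnected ⟨b, hb⟩ ⟨a, ha⟩
    have hr' := reachable_induce_mono G hA hb ha hr
    exact ⟨⟨b, hA hb⟩, (SimpleGraph.ConnectedComponent.sound hr' : _), rfl⟩
  · rintro ⟨⟨b, hbP⟩, hbK, rfl⟩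
    have hr : (G.induce P).Reachable ⟨a, hA ha⟩ ⟨b, hbP⟩ :=
      (SimpleGraph.ConnectedComponent.exact hbK.symm : _)
    obtain ⟨p⟩ := hr
    obtain ⟨hbA, -⟩ := walk_stay G hno p ha
    exact hbA

lemma posSupp_neg (w : V → ℝ) : posSupp (-w) = negSupp w := by
  ext v; simp [posSupp, negSupp]

lemma negSupp_neg (w : V → ℝ) : negSupp (-w) = posSupp w := by
  ext v; simp [posSupp, negSupp]

lemma ne_zero_of_mem_posSupp {w : V → ℝ} {a : V} (ha : a ∈ posSupp w) : w ≠ 0 := by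
  intro h; rw [h] at ha; simp [posSupp] at ha

lemma disjoint_pos_neg (x : V → ℝ) : ∀ v ∈ posSupp x, v ∉ negSupp x := by
  intro v hv hv'
  simp only [posSupp, negSupp, mem_setOf_eq] at hv hv'
  linarith

/-- a scaling constant dominating `y` on the support of `u`. -/
lemma exists_scale (u y : V → ℝ) (hu : u ≠ 0) :
    ∃ c : ℝ, 0 < c ∧ ∀ v, u v ≠ 0 → |y v| < c * |u v| := by
  have hVne : Nonempty V := by
    by_contra h
    exact hu (funext fun v => absurd ⟨v⟩ h)
  classical
  set T : Finset V := Finset.univ.filter (fun v => u v ≠ 0) with hT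
  have hTne : T.Nonempty := by
    have : ∃ v, u v ≠ 0 := by
      by_contra h; push_neg at h; exact hu (funext h)
    obtain ⟨v, hv⟩ := this
    exact ⟨v, by simp [hT, hv]⟩
  obtain ⟨v₀, hv₀T, hv₀⟩ := Finset.exists_min_image T (fun v => |u v|) hTne
  set m : ℝ := |u v₀| with hm
  have hmpos : 0 < m := by
    have : u v₀ ≠ 0 := by simpa [hT] using hv₀T
    exact abs_pos.mpr this
  set M : ℝ := Finset.univ.sup' Finset.univ_nonempty (fun v => |y v|) with hM
  have hMle : ∀ v, |y v| ≤ M := fun v =>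
    Finset.le_sup' (f := fun v => |y v|) (Finset.mem_univ v)
  have hM0 : (0:ℝ) ≤ M := le_trans (abs_nonneg _) (hMle (Classical.arbitrary V))
  refine ⟨(M + 1) / m, ?_, ?_⟩
  · apply div_pos ?_ hmpos; linarith
  · intro v hv
    have hvT : v ∈ T := by simp [hT, hv]
    have h1 : m ≤ |u v| := hv₀ v hvT
    have h3 : (M + 1) / m * m = M + 1 := div_mul_cancel₀ _ (ne_of_gt hmpos)
    calc |y v| ≤ M := hMle v
      _ < M + 1 := by linarith
      _ = (M + 1) / m * m := h3.symm
      _ ≤ (M + 1) / m * |u v| := by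
          apply mul_le_mul_of_nonneg_left h1
          positivity

/-- min-ratio scalar: `x = s•z` at some point of `supp x`, and `s•z` lies between `0` and `x`. -/
lemma exists_min_ratio (x z : V → ℝ) (hx0 : x ≠ 0)
    (hp : posSupp z = posSupp x) (hn : negSupp z = negSupp x) :
    ∃ s : ℝ, 0 < s ∧ (∃ v₀, x v₀ ≠ 0 ∧ x v₀ = s * z v₀) ∧
      (∀ v ∈ posSupp x, s * z v ≤ x v) ∧ (∀ v ∈ negSupp x, x v ≤ s * z v) := by
  classical
  set T : Finset V := Finset.univ.filter (fun v => x v ≠ 0) with hT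
  have hTne : T.Nonempty := by
    have : ∃ v, x v ≠ 0 := by
      by_contra h; push_neg at h; exact hx0 (funext h)
    obtain ⟨v, hv⟩ := this
    exact ⟨v, by simp [hT, hv]⟩
  have hsign : ∀ v ∈ T, 0 < x v / z v := by
    intro v hv
    have hv' : x v ≠ 0 := by simpa [hT] using hv
    rcases hv'.lt_or_gt with h | h
    · have hz : z v < 0 := by
        have h2 : v ∈ negSupp x := h
        rw [← hn] at h2; exact h2
      exact div_pos_of_neg_of_neg h hz
    · have hz : 0 < z v := by
        have h2 : v ∈ posSupp x := h
        rw [← hp] at h2; exact h2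
      exact div_pos h hz
  obtain ⟨v₀, hv₀T, hv₀⟩ := Finset.exists_min_image T (fun v => x v / z v) hTne
  set s : ℝ := x v₀ / z v₀ with hs
  have hz₀ : z v₀ ≠ 0 := by
    intro h
    have h2 := hsign v₀ hv₀T
    rw [← hs] at h2
    rw [hs, h, div_zero] at h2
    exact lt_irrefl 0 h2
  refine ⟨s, hsign v₀ hv₀T,
    ⟨v₀, by simpa [hT] using hv₀T, (div_mul_cancel₀ (x v₀) hz₀).symm⟩, ?_, ?_⟩
  · intro v hv
    have hxv : 0 < x v := hv
    have hzv : 0 < z v := by rw [← hp] at hv; exact hv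
    have hle : s ≤ x v / z v := hv₀ v (by simp [hT, ne_of_gt hxv])
    have h4 := mul_le_mul_of_nonneg_right hle (le_of_lt hzv)
    rwa [div_mul_cancel₀ _ (ne_of_gt hzv)] at h4
  · intro v hv
    have hxv : x v < 0 := hv
    have hzv : z v < 0 := by rw [← hn] at hv; exact hv
    have hle : s ≤ x v / z v := hv₀ v (by simp [hT, ne_of_lt hxv])
    have h4 := mul_le_mul_of_nonpos_right hle (le_of_lt hzv)
    rwa [div_mul_cancel₀ _ (ne_of_lt hzv)] at h4

/-- Key combinatorial lemma: any nonzero `u ∈ L` whose sign pattern is dominated by,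
but not equal to, the pattern of a broken `y` has full negative support, connected
positive support, and no edges from its positive support to the rest of `posSupp y`. -/
lemma aux_key (G : SimpleGraph V) (L : Submodule ℝ (V → ℝ)) (hL : Semivalid G L)
    (y : V → ℝ) (hy : y ∈ L) (hy0 : y ≠ 0)
    (hbroken : ¬ (G.induce (posSupp y)).Connected)
    (u : V → ℝ) (hu : u ∈ L) (hu0 : u ≠ 0)
    (hpos : posSupp u ⊆ posSupp y) (hneg : negSupp u ⊆ negSupp y)
    (hne : ¬ (posSupp u = posSupp y ∧ negSupp u = negSupp y)) :
    negSupp u = negSupp y ∧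
      (∀ a ∈ posSupp u, ∀ b ∈ posSupp y \ posSupp u, ¬ G.Adj a b) ∧
      (G.induce (posSupp u)).Connected := by
  obtain ⟨⟨hyP, hyN⟩, hyconn, -, hybrk⟩ := hL y hy hy0
  obtain ⟨hPN, -⟩ := hybrk hbroken
  obtain ⟨hcc2, hNconn⟩ := hyconn.resolve_left hbroken
  obtain ⟨⟨huP, huN⟩, huconn, -, -⟩ := hL u hu hu0
  have hPNdisj := disjoint_pos_neg y
  have huzeroP : ∀ v ∈ posSupp y \ posSupp u, u v = 0 := by
    rintro v ⟨hvP, hvu⟩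
    by_contra h
    rcases lt_or_gt_of_ne h with h' | h'
    · exact hPNdisj v hvP (hneg h')
    · exact hvu h'
  have huzeroN : ∀ v ∈ negSupp y \ negSupp u, u v = 0 := by
    rintro v ⟨hvN, hvu⟩
    by_contra h
    rcases lt_or_gt_of_ne h with h' | h'
    · exact hvu h'
    · exact hPNdisj v (hpos h') hvN
  have huzeroO : ∀ v, v ∉ posSupp y → v ∉ negSupp y → u v = 0 := by
    intro v hvP hvN
    by_contra h
    rcases lt_or_gt_of_ne h with h' | h'
    · exact hvN (hneg h')
    · exact hvP (hpos h')
  have hyzeroO : ∀ v, v ∉ posSupp y → v ∉ negSupp y → y v = 0 := by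
    intro v hvP hvN
    by_contra h
    rcases lt_or_gt_of_ne h with h' | h'
    · exact hvN h'
    · exact hvP h'
  obtain ⟨c, hc, hcdom⟩ := exists_scale u y hu0
  set w : V → ℝ := c • u - y with hwdef
  have hwL : w ∈ L := L.sub_mem (L.smul_mem c hu) hy
  have hwval : ∀ v, w v = c * u v - y v := fun v => rfl
  have hA1 : ∀ v ∈ posSupp u, 0 < w v := by
    intro v hv
    have hv' : 0 < u v := hv
    have h1 := hcdom v (ne_of_gt hv')
    rw [abs_of_pos hv'] at h1
    have h2 := le_abs_self (y v)
    rw [hwval]; linarith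
  have hA2 : ∀ v ∈ negSupp u, w v < 0 := by
    intro v hv
    have hv' : u v < 0 := hv
    have h1 := hcdom v (ne_of_lt hv')
    rw [abs_of_neg hv'] at h1
    have h2 := neg_abs_le (y v)
    rw [hwval]; linarith
  have hA3 : ∀ v ∈ posSupp y \ posSupp u, w v < 0 := by
    intro v hv
    have h1 := huzeroP v hv
    have h2 : 0 < y v := hv.1
    rw [hwval, h1]; linarith
  have hA4 : ∀ v ∈ negSupp y \ negSupp u, 0 < w v := by
    intro v hv
    have h1 := huzeroN v hv
    have h2 : y v < 0 := hv.1
    rw [hwval, h1]; linarith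
  have hA5 : ∀ v, v ∉ posSupp y → v ∉ negSupp y → w v = 0 := by
    intro v hvP hvN
    rw [hwval, huzeroO v hvP hvN, hyzeroO v hvP hvN]; ring
  have hposw : posSupp w = posSupp u ∪ (negSupp y \ negSupp u) := by
    ext v
    constructor
    · intro hv
      by_cases h1 : v ∈ posSupp u
      · exact Or.inl h1
      by_cases h2 : v ∈ posSupp y
      · exact absurd (lt_trans (hA3 v ⟨h2, h1⟩) hv) (lt_irrefl _)
      by_cases h3 : v ∈ negSupp y
      · by_cases h4 : v ∈ negSupp u
        · exact absurd (lt_trans (hA2 v h4) hv) (lt_irrefl _)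
        · exact Or.inr ⟨h3, h4⟩
      · have hv' : 0 < w v := hv
        rw [hA5 v h2 h3] at hv'
        exact absurd hv' (lt_irrefl _)
    · rintro (h | h)
      · exact hA1 v h
      · exact hA4 v h
  have hnegw : negSupp w = negSupp u ∪ (posSupp y \ posSupp u) := by
    ext v
    constructor
    · intro hv
      by_cases h1 : v ∈ negSupp u
      · exact Or.inl h1
      by_cases h3 : v ∈ posSupp y
      · by_cases h4 : v ∈ posSupp u
        · exact absurd (lt_trans hv (hA1 v h4)) (lt_irrefl _)
        · exact Or.inr ⟨h3, h4⟩
      by_cases h2 : v ∈ negSupp y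
      · by_cases h4 : v ∈ negSupp u
        · exact Or.inl h4
        · exact absurd (lt_trans hv (hA4 v ⟨h2, h4⟩)) (lt_irrefl _)
      · have hv' : w v < 0 := hv
        rw [hA5 v h3 h2] at hv'
        exact absurd hv' (lt_irrefl _)
    · rintro (h | h)
      · exact hA2 v h
      · exact hA3 v h
  -- Part 1 : negSupp u = negSupp y
  have hnegEq : negSupp u = negSupp y := by
    by_contra hneq
    have hdiffne : (negSupp y \ negSupp u).Nonempty := by
      rw [Set.diff_nonempty]
      intro hsub
      exact hneq (le_antisymm hneg hsub)
    have hdisc : ¬ (G.induce (posSupp w)).Connected := by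
      rw [hposw]
      refine disconnected_of_partition G huP hdiffne ?_ ?_
      · intro a ha hb
        exact hPNdisj a (hpos ha) hb.1
      · intro a ha b hb
        exact hPN a (hpos ha) b hb.1
    have hw0 : w ≠ 0 := by
      obtain ⟨a, ha⟩ := huP
      exact ne_zero_of_mem_posSupp (show a ∈ posSupp w by rw [hposw]; exact Or.inl ha)
    obtain ⟨-, -, -, hwbrk⟩ := hL w hwL hw0
    obtain ⟨hwPN, -⟩ := hwbrk hdisc
    obtain ⟨a, haU, b, hbD, hadj⟩ := exists_crossing_edge G hNconn hneg huN hdiffne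
    exact hwPN b (by rw [hposw]; exact Or.inr hbD) a (by rw [hnegw]; exact Or.inl haU) hadj.symm
  have hposne : posSupp u ≠ posSupp y := fun h => hne ⟨h, hnegEq⟩
  have hPdiff : (posSupp y \ posSupp u).Nonempty := by
    rw [Set.diff_nonempty]
    intro hsub
    exact hposne (le_antisymm hpos hsub)
  -- Part 2 : no edges between posSupp u and the rest of posSupp y
  have hposw' : posSupp w = posSupp u := by
    rw [hposw, hnegEq, Set.diff_self, Set.union_empty]
  have hnegw' : negSupp w = negSupp y ∪ (posSupp y \ posSupp u) := by
    rw [hnegw, hnegEq]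
  have hnoedge : ∀ a ∈ posSupp u, ∀ b ∈ posSupp y \ posSupp u, ¬ G.Adj a b := by
    have hnwL : -w ∈ L := L.neg_mem hwL
    have hposnw : posSupp (-w) = negSupp y ∪ (posSupp y \ posSupp u) := by
      rw [posSupp_neg, hnegw']
    have hnegnw : negSupp (-w) = posSupp u := by
      rw [negSupp_neg, hposw']
    have hdisc : ¬ (G.induce (posSupp (-w))).Connected := by
      rw [hposnw]
      refine disconnected_of_partition G hyN hPdiff ?_ ?_
      · intro a ha hb
        exact hPNdisj a hb.1 ha
      · intro a ha b hb hadj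
        exact hPN b hb.1 a ha hadj.symm
    have hnw0 : -w ≠ 0 := by
      obtain ⟨a, ha⟩ := hyN
      exact ne_zero_of_mem_posSupp (show a ∈ posSupp (-w) by rw [hposnw]; exact Or.inl ha)
    obtain ⟨-, -, -, hnwbrk⟩ := hL (-w) hnwL hnw0
    obtain ⟨hnwPN, -⟩ := hnwbrk hdisc
    intro a ha b hb hadj
    exact hnwPN b (by rw [hposnw]; exact Or.inr hb) a (by rw [hnegnw]; exact ha) hadj.symm
  -- Part 3 : posSupp u is connected
  refine ⟨hnegEq, hnoedge, ?_⟩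
  by_cases hconn : (G.induce (posSupp u)).Connected
  · exact hconn
  exfalso
  obtain ⟨hcc2u, -⟩ := huconn.resolve_left hconn
  have hne' : Nonempty ↥(posSupp u) := by
    obtain ⟨a, ha⟩ := huP; exact ⟨⟨a, ha⟩⟩
  have hnp : ¬ (G.induce (posSupp u)).Preconnected := fun h => hconn ⟨h⟩
  simp only [SimpleGraph.Preconnected] at hnp
  push_neg at hnp
  obtain ⟨a1, a2, hnr⟩ := hnp
  obtain ⟨p, hp⟩ := hPdiff
  set c1 := (G.induce (posSupp y)).connectedComponentMk ⟨a1.1, hpos a1.2⟩ with hc1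
  set c2 := (G.induce (posSupp y)).connectedComponentMk ⟨a2.1, hpos a2.2⟩ with hc2
  set c3 := (G.induce (posSupp y)).connectedComponentMk ⟨p, hp.1⟩ with hc3
  have h12 : c1 ≠ c2 := by
    intro h
    obtain ⟨q⟩ := SimpleGraph.ConnectedComponent.exact h
    obtain ⟨hw2, hr⟩ := walk_stay G hnoedge q a1.2
    exact hnr hr
  have h13 : c1 ≠ c3 := by
    intro h
    obtain ⟨q⟩ := SimpleGraph.ConnectedComponent.exact h
    obtain ⟨hw2, -⟩ := walk_stay G hnoedge q a1.2
    exact hp.2 hw2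
  have h23 : c2 ≠ c3 := by
    intro h
    obtain ⟨q⟩ := SimpleGraph.ConnectedComponent.exact h
    obtain ⟨hw2, -⟩ := walk_stay G hnoedge q a2.2
    exact hp.2 hw2
  obtain ⟨z1, z2, hz, huniv⟩ := Nat.card_eq_two_iff.mp hcc2
  have hmem : ∀ c : (G.induce (posSupp y)).ConnectedComponent, c = z1 ∨ c = z2 := by
    intro c
    have : c ∈ ({z1, z2} : Set _) := huniv ▸ Set.mem_univ c
    simpa using this
  rcases hmem c1 with h1 | h1 <;> rcases hmem c2 with h2 | h2 <;> rcases hmem c3 with h3 | h3 <;>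
    first
      | exact h12 (h1.trans h2.symm)
      | exact h13 (h1.trans h3.symm)
      | exact h23 (h2.trans h3.symm)

/-- Vectors in the closure of a sign cone have dominated sign pattern. -/
lemma closure_sign {L : Submodule ℝ (V → ℝ)} {x y : V → ℝ}
    (hcl : x ∈ closure (signCone L y)) :
    (∀ v ∈ posSupp y, 0 ≤ x v) ∧ (∀ v ∈ negSupp y, x v ≤ 0) ∧
      ∀ v, v ∉ posSupp y → v ∉ negSupp y → x v = 0 := by
  set C : Set (V → ℝ) := {z | ∀ v, (v ∈ posSupp y → 0 ≤ z v) ∧ (v ∈ negSupp y → z v ≤ 0) ∧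
    (v ∉ posSupp y → v ∉ negSupp y → z v = 0)} with hC
  have hclosed : IsClosed C := by
    have hrw : C = ⋂ v, ((fun z : V → ℝ => z v) ⁻¹'
        {t | (v ∈ posSupp y → 0 ≤ t) ∧ (v ∈ negSupp y → t ≤ 0) ∧
          (v ∉ posSupp y → v ∉ negSupp y → t = 0)}) := by
      ext z
      simp only [hC, mem_setOf_eq, mem_iInter, mem_preimage]
    rw [hrw]
    refine isClosed_iInter fun v => IsClosed.preimage (continuous_apply v) ?_
    rw [Set.setOf_and, Set.setOf_and]
    refine IsClosed.inter ?_ (IsClosed.inter ?_ ?_)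
    · by_cases hv : v ∈ posSupp y
      · simp only [hv, forall_true_left]
        exact isClosed_Ici
      · simp only [hv, IsEmpty.forall_iff, Set.setOf_true]
        exact isClosed_univ
    · by_cases hv : v ∈ negSupp y
      · simp only [hv, forall_true_left]
        exact isClosed_Iic
      · simp only [hv, IsEmpty.forall_iff, Set.setOf_true]
        exact isClosed_univ
    · by_cases h1 : v ∈ posSupp y
      · simp only [h1, not_true_eq_false, IsEmpty.forall_iff, Set.setOf_true]
        exact isClosed_univ
      by_cases h2 : v ∈ negSupp y
      · simp only [h1, h2, not_true_eq_false, not_false_eq_true, forall_true_left,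
          IsEmpty.forall_iff, Set.setOf_true]
        exact isClosed_univ
      · simp only [h1, h2, not_false_eq_true, forall_true_left]
        have : {t : ℝ | t = 0} = {0} := Set.setOf_eq_eq_singleton
        rw [this]
        exact isClosed_singleton
  have hsub : signCone L y ⊆ C := by
    rintro z ⟨hzL, hzp, hzn⟩ v
    refine ⟨?_, ?_, ?_⟩
    · intro hv
      rw [← hzp] at hv
      exact le_of_lt hv
    · intro hv
      rw [← hzn] at hv
      exact le_of_lt hv
    · intro h1 h2
      rw [← hzp] at h1
      rw [← hzn] at h2
      simp only [posSupp, negSupp, mem_setOf_eq, not_lt] at h1 h2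
      linarith
  have hxC : x ∈ C := closure_minimal hsub hclosed hcl
  exact ⟨fun v hv => (hxC v).1 hv, fun v hv => (hxC v).2.1 hv,
    fun v h1 h2 => (hxC v).2.2 h1 h2⟩

end Aux

/-- if `α = signCone L x` lies in the boundary of a broken cone
`β = signCone L y`, then (i) the negative supports agree, (ii) the positive support
of `α` is a single connected component of `G[supp₊(β)]`, (iii) `α` is 1-dimensional. -/
theorem stmt3 (G : SimpleGraph V) (hG : G.Connected) (L : Submodule ℝ (V → ℝ))
    (hL : Semivalid G L) (x y : V → ℝ) (hx : x ∈ L) (hx0 : x ≠ 0)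
    (hy : y ∈ L) (hy0 : y ≠ 0)
    (hbroken : ¬ (G.induce (posSupp y)).Connected)
    (hbd : signCone L x ⊆ closure (signCone L y) \ signCone L y) :
    negSupp x = negSupp y ∧
    (∃ K : (G.induce (posSupp y)).ConnectedComponent,
      posSupp x = Subtype.val '' K.supp) ∧
    coneDim L x = 1 := by
  have hxmem : x ∈ signCone L x := ⟨hx, rfl, rfl⟩
  obtain ⟨hcl, hnotin⟩ := hbd hxmem
  obtain ⟨hP0, hN0, hZ0⟩ := closure_sign hcl
  have hpos : posSupp x ⊆ posSupp y := by
    intro v hv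
    by_contra h
    by_cases h2 : v ∈ negSupp y
    · have := hN0 v h2
      exact absurd hv (not_lt.mpr this)
    · have hv' : 0 < x v := hv
      rw [hZ0 v h h2] at hv'
      exact lt_irrefl 0 hv'
  have hneg : negSupp x ⊆ negSupp y := by
    intro v hv
    by_contra h
    by_cases h2 : v ∈ posSupp y
    · have := hP0 v h2
      exact absurd hv (not_lt.mpr this)
    · have hv' : x v < 0 := hv
      rw [hZ0 v h2 h] at hv'
      exact lt_irrefl 0 hv'
  have hne : ¬ (posSupp x = posSupp y ∧ negSupp x = negSupp y) := by
    rintro ⟨h1, h2⟩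
    exact hnotin ⟨hx, h1, h2⟩
  obtain ⟨hnegEq, hnoedge, hconn⟩ := aux_key G L hL y hy hy0 hbroken x hx hx0 hpos hneg hne
  obtain ⟨⟨hxP, hxN⟩, -, -, -⟩ := hL x hx hx0
  refine ⟨hnegEq, component_of G hpos hxP hconn hnoedge, ?_⟩
  have hxne : posSupp x ≠ posSupp y := fun h => hne ⟨h, hnegEq⟩
  have hspan : Submodule.span ℝ (signCone L x) = Submodule.span ℝ {x} := by
    apply le_antisymm
    · rw [Submodule.span_le]
      rintro z ⟨hzL, hzp, hzn⟩
      rw [SetLike.mem_coe, Submodule.mem_span_singleton]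
      obtain ⟨s, hs, ⟨v₀, hv₀ne, hv₀eq⟩, hsle, hsge⟩ := exists_min_ratio x z hx0 hzp hzn
      set u : V → ℝ := x - s • z with hudef
      have huval : ∀ v, u v = x v - s * z v := fun v => rfl
      by_cases hu0 : u = 0
      · have hxz : x = s • z := by rwa [sub_eq_zero] at hu0
        exact ⟨s⁻¹, by rw [hxz, smul_smul, inv_mul_cancel₀ (ne_of_gt hs), one_smul]⟩
      exfalso
      have huL : u ∈ L := L.sub_mem hx (L.smul_mem s hzL)
      have hzsupp : ∀ v, x v = 0 → z v = 0 := by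
        intro v hv
        by_contra h
        rcases lt_or_gt_of_ne h with h' | h'
        · have h2 : v ∈ negSupp x := hzn ▸ (show v ∈ negSupp z from h')
          have h3 : x v < 0 := h2
          rw [hv] at h3
          exact lt_irrefl 0 h3
        · have h2 : v ∈ posSupp x := hzp ▸ (show v ∈ posSupp z from h')
          have h3 : 0 < x v := h2
          rw [hv] at h3
          exact lt_irrefl 0 h3
      have hup : posSupp u ⊆ posSupp x := by
        intro v hv
        have hv' : 0 < x v - s * z v := hv
        by_contra h
        simp only [posSupp, mem_setOf_eq, not_lt] at h
        rcases lt_or_eq_of_le h with h' | h'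
        · have h2 := hsge v h'
          linarith
        · rw [h', hzsupp v h'] at hv'
          simp at hv'
      have hun : negSupp u ⊆ negSupp x := by
        intro v hv
        have hv' : x v - s * z v < 0 := hv
        by_contra h
        simp only [negSupp, mem_setOf_eq, not_lt] at h
        rcases lt_or_eq_of_le h with h' | h'
        · have h2 := hsle v h'
          linarith
        · rw [← h', hzsupp v h'.symm] at hv'
          simp at hv'
      have hneU : ¬ (posSupp u = posSupp y ∧ negSupp u = negSupp y) := by
        rintro ⟨h1, -⟩
        rw [h1] at hup
        exact hxne (le_antisymm hpos hup)
      obtain ⟨hnegEqU, hnoedgeU, hconnU⟩ :=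
        aux_key G L hL y hy hy0 hbroken u huL hu0 (le_trans hup hpos) (le_trans hun hneg) hneU
      have hu_v₀ : u v₀ = 0 := by rw [huval, hv₀eq]; ring
      rcases hv₀ne.lt_or_gt with hlt | hgt
      · have hv₀N : v₀ ∈ negSupp y := hnegEq ▸ (show v₀ ∈ negSupp x from hlt)
        have : v₀ ∈ negSupp u := hnegEqU ▸ hv₀N
        simp only [negSupp, mem_setOf_eq] at this
        rw [hu_v₀] at this
        exact lt_irrefl 0 this
      · -- v₀ ∈ posSupp x; show posSupp x ⊆ posSupp u for a contradiction
        obtain ⟨⟨huPne, -⟩, -, -, -⟩ := hL u huL hu0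
        obtain ⟨a, ha⟩ := huPne
        have hsub : posSupp x ⊆ posSupp u := by
          intro b hb
          obtain ⟨q⟩ := hconn.preconnected ⟨a, hup ha⟩ ⟨b, hb⟩
          have hno : ∀ a' ∈ posSupp u, ∀ b' ∈ posSupp x \ posSupp u, ¬ G.Adj a' b' := by
            intro a' ha' b' hb'
            exact hnoedgeU a' ha' b' ⟨hpos hb'.1, hb'.2⟩
          obtain ⟨hbu, -⟩ := walk_stay G hno q ha
          exact hbu
        have : v₀ ∈ posSupp u := hsub hgt
        simp only [posSupp, mem_setOf_eq] at this
        rw [hu_v₀] at this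
        exact lt_irrefl 0 this
    · exact Submodule.span_mono (Set.singleton_subset_iff.mpr hxmem)
  rw [coneDim, hspan]
  exact finrank_span_singleton hx0
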